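/- For the offline 2-connection problem with shared backups (2-CESB) where the two sources coincide (s_1 = s_2 = s) and there is a feasible solution in which the backup paths share edges, there is also a feasible solution in which the two backup paths coincide on an initial segment from s to some node x and are edge-disjoint afterwards; i.e., feasibility is equivalent to the existence of either (i) four pairwise edge-disjoint paths s→t_1, s→t_1, s→t_2, s→t_2, or (ii) a node x and five pairwise edge-disjoint paths s→t_1, s→t_2, s→x, x→t_1, x→t_2. -/

import Mathlib

private lemma walk_prefix_to_set {V : Type*} {G : SimpleGraph V} (S : Set V) :
    ∀ {a b : V} (w : G.Walk a b), b ∈ S →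
    ∃ (x : V) (_ : x ∈ S) (w' : G.Walk a x),
      (∀ e ∈ w'.edges, e ∈ w.edges) ∧ ∀ y ∈ w'.support, y = x ∨ y ∉ S := by
  intro a b w
  induction w with
  | nil =>
    intro h
    exact ⟨_, h, .nil, by simp, by simp⟩
  | @cons u v b h p ih =>
    intro hb
    by_cases hu : u ∈ S
    · exact ⟨u, hu, .nil, by simp, by simp⟩
    · obtain ⟨x, hx, w', hsub, hsup⟩ := ih hb
      refine ⟨x, hx, .cons h w', ?_, ?_⟩
      · intro e he
        rw [SimpleGraph.Walk.edges_cons] at he ⊢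
        rcases List.mem_cons.mp he with h' | h'
        · exact List.mem_cons.mpr (Or.inl h')
        · exact List.mem_cons.mpr (Or.inr (hsub e h'))
      · intro y hy
        rw [SimpleGraph.Walk.support_cons] at hy
        rcases List.mem_cons.mp hy with h' | h'
        · subst h'; exact Or.inr hu
        · exact hsup y h'

/-- Offline 2-CESB with a common source `s₁ = s₂ = s`: the problem (find paths
`p₁, b₁ : s → t₁` and `p₂, b₂ : s → t₂`, pairwise edge-disjoint except possibly
`b₁` with `b₂`) is feasible iff either (i) there are four pairwise edge-disjoint
paths `s → t₁`, `s → t₁`, `s → t₂`, `s → t₂`, or (ii) there are a node `x` and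
five pairwise edge-disjoint paths `s → t₁`, `s → t₂`, `s → x`, `x → t₁`,
`x → t₂` (the two backup paths coincide on the initial segment `s → x` and are
edge-disjoint afterwards). -/
theorem stmt_17 {V : Type*} (G : SimpleGraph V) (s t₁ t₂ : V) (hne : t₁ ≠ t₂) :
    (∃ (p₁ b₁ : G.Walk s t₁) (p₂ b₂ : G.Walk s t₂),
        List.Disjoint p₁.edges b₁.edges ∧
        List.Disjoint p₁.edges p₂.edges ∧
        List.Disjoint p₁.edges b₂.edges ∧
        List.Disjoint b₁.edges p₂.edges ∧
        List.Disjoint p₂.edges b₂.edges)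
    ↔ ((∃ (p₁ q₁ : G.Walk s t₁) (p₂ q₂ : G.Walk s t₂),
          List.Pairwise List.Disjoint
            [p₁.edges, q₁.edges, p₂.edges, q₂.edges])
      ∨ (∃ (x : V) (q₁ : G.Walk s t₁) (q₂ : G.Walk s t₂) (q₃ : G.Walk s x)
            (q₄ : G.Walk x t₁) (q₅ : G.Walk x t₂),
          List.Pairwise List.Disjoint
            [q₁.edges, q₂.edges, q₃.edges, q₄.edges, q₅.edges])) := by
  constructor
  · rintro ⟨p₁, b₁, p₂, b₂, h11, h12, h13, h14, h15⟩
    classical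
    right
    -- replace b₁ by a simple path c₁
    set c₁ : G.Walk s t₁ := b₁.bypass with hc₁
    have hc₁path : c₁.IsPath := b₁.bypass_isPath
    have hc₁sub : c₁.edges ⊆ b₁.edges := b₁.edges_bypass_subset
    -- walk from t₂ back along b₂ until first vertex of c₁
    have hsS : s ∈ ({y | y ∈ c₁.support} : Set V) := c₁.start_mem_support
    obtain ⟨x, hx, w', hsub, hsup⟩ :=
      walk_prefix_to_set ({y | y ∈ c₁.support} : Set V) b₂.reverse hsS
    have hxc : x ∈ c₁.support := hx
    refine ⟨x, p₁, p₂, c₁.takeUntil x hxc, c₁.dropUntil x hxc, w'.reverse, ?_⟩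
    have hq3 : (c₁.takeUntil x hxc).edges ⊆ c₁.edges := c₁.edges_takeUntil_subset hxc
    have hq4 : (c₁.dropUntil x hxc).edges ⊆ c₁.edges := c₁.edges_dropUntil_subset hxc
    have hq5b : w'.reverse.edges ⊆ b₂.edges := by
      intro e he
      rw [SimpleGraph.Walk.edges_reverse, List.mem_reverse] at he
      have := hsub e he
      rw [SimpleGraph.Walk.edges_reverse, List.mem_reverse] at this
      exact this
    have hc₁b : c₁.edges ⊆ b₁.edges := hc₁sub
    -- q₅ edge-disjoint from c₁
    have hkey : List.Disjoint w'.reverse.edges c₁.edges := by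
      intro e he he'
      rw [SimpleGraph.Walk.edges_reverse, List.mem_reverse] at he
      induction e using Sym2.ind with
      | _ u v =>
        have hadj : G.Adj u v := c₁.adj_of_mem_edges he'
        have hu : u ∈ w'.support := SimpleGraph.Walk.fst_mem_support_of_mem_edges _ he
        have hv : v ∈ w'.support := SimpleGraph.Walk.snd_mem_support_of_mem_edges _ he
        have hu' : u ∈ c₁.support := SimpleGraph.Walk.fst_mem_support_of_mem_edges _ he'
        have hv' : v ∈ c₁.support := SimpleGraph.Walk.snd_mem_support_of_mem_edges _ he'
        rcases hsup u hu with h | h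
        · rcases hsup v hv with h2 | h2
          · exact hadj.ne (h.trans h2.symm)
          · exact h2 hv'
        · exact h hu'
    -- q₃ and q₄ edge-disjoint since c₁ is a path
    have h34 : List.Disjoint (c₁.takeUntil x hxc).edges (c₁.dropUntil x hxc).edges := by
      have hnd : c₁.edges.Nodup := hc₁path.isTrail.edges_nodup
      have hspec : (c₁.takeUntil x hxc).append (c₁.dropUntil x hxc) = c₁ :=
        c₁.take_spec hxc
      have : ((c₁.takeUntil x hxc).append (c₁.dropUntil x hxc)).edges = c₁.edges := by
        rw [hspec]
      rw [SimpleGraph.Walk.edges_append] at this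
      rw [← this] at hnd
      exact (List.nodup_append'.mp hnd).2.2
    simp only [List.pairwise_cons, List.mem_cons, List.mem_singleton,
      List.not_mem_nil]
    refine ⟨?_, ?_, ?_, ?_, ?_⟩
    · rintro l hl
      simp only [List.mem_cons, List.not_mem_nil, or_false] at hl
      rcases hl with rfl | rfl | rfl | rfl
      · exact h12
      · exact fun e he he' => h11 he (hc₁b (hq3 he'))
      · exact fun e he he' => h11 he (hc₁b (hq4 he'))
      · exact fun e he he' => h13 he (hq5b he')
    · rintro l hl
      simp only [List.mem_cons, List.not_mem_nil, or_false] at hl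
      rcases hl with rfl | rfl | rfl
      · exact fun e he he' => h14 (hc₁b (hq3 he')) he
      · exact fun e he he' => h14 (hc₁b (hq4 he')) he
      · exact fun e he he' => h15 he (hq5b he')
    · rintro l hl
      simp only [List.mem_cons, List.not_mem_nil, or_false] at hl
      rcases hl with rfl | rfl
      · exact h34
      · exact fun e he he' => hkey he' (hq3 he)
    · rintro l hl
      simp only [List.mem_cons, List.not_mem_nil, or_false] at hl
      rcases hl with rfl
      exact fun e he he' => hkey he' (hq4 he)
    · simp
  · rintro (⟨p₁, q₁, p₂, q₂, hp⟩ | ⟨x, q₁, q₂, q₃, q₄, q₅, hp⟩)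
    · simp only [List.pairwise_cons, List.mem_cons, List.not_mem_nil, or_false,
        List.mem_singleton, forall_eq_or_imp, forall_eq] at hp
      obtain ⟨⟨h1, h2, h3⟩, ⟨h4, h5⟩, h6, _⟩ := hp
      exact ⟨p₁, q₁, p₂, q₂, h1, h2, h3, h4, h6⟩
    · simp only [List.pairwise_cons, List.mem_cons, List.not_mem_nil, or_false,
        List.mem_singleton, forall_eq_or_imp, forall_eq] at hp
      obtain ⟨⟨h12, h13, h14, h15⟩, ⟨h23, h24, h25⟩, ⟨h34', h35⟩, h45, _⟩ := hp
      refine ⟨q₁, q₃.append q₄, q₂, q₃.append q₅, ?_, h12, ?_, ?_, ?_⟩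
      · rw [SimpleGraph.Walk.edges_append]
        exact List.disjoint_append_right.mpr ⟨h13, h14⟩
      · rw [SimpleGraph.Walk.edges_append]
        exact List.disjoint_append_right.mpr ⟨h13, h15⟩
      · rw [SimpleGraph.Walk.edges_append]
        exact List.disjoint_append_left.mpr ⟨h23.symm, h24.symm⟩
      · rw [SimpleGraph.Walk.edges_append]
        exact List.disjoint_append_right.mpr ⟨h23, h25⟩
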